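/- arXiv:1903.09029 — 2 statements merged into one kernel-verified Lean document; each statement's English description precedes it below -/
import Mathlib

section
/- Let 𝒵 be a nonempty finite type and let φ, ψ be probability measures on 𝒵 with φ absolutely continuous with respect to ψ. Let (𝒵₀, Π₀) be a probability space, let loss : 𝒵₀ × 𝒵 → (0,1) be measurable, let M ≥ 2 be an integer, and let Z₀^(1),…,Z₀^(M) be i.i.d. random elements of 𝒵₀ with law Π₀. Define R(Π_M, φ) = (1/M)·Σ_{v=1}^M E_{Ẑ∼φ}[loss(Z₀^(v), Ẑ)] and R(Π₀, φ) = E_{Z₀∼Π₀} E_{Ẑ∼φ}[loss(Z₀, Ẑ)]. Then for every δ ∈ (0,1), with probability at least 1−δ over the draw of (Z₀^(1),…,Z₀^(M)), on the event that R(Π_M, φ) ∈ (0,1), we have M·kl( R(Π_M, φ) ‖ R(Π₀, φ) ) ≤ KL(φ‖ψ) + log( exp(1/(12M))·√(πM/2) + 2 ) − log δ. -/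
open MeasureTheory

/-- Binary Kullback–Leibler divergence `kl(a‖b)`. -/
noncomputable def klBin (a b : ℝ) : ℝ :=
  a * Real.log (a / b) + (1 - a) * Real.log ((1 - a) / (1 - b))

section StirlingPart
open MeasureTheory Finset Filter Stirling Real Topology

lemma stirlingSeq_ge_sqrt_pi (n : ℕ) (hn : n ≠ 0) : Real.sqrt Real.pi ≤ stirlingSeq n := by
  obtain ⟨m, rfl⟩ := Nat.exists_eq_succ_of_ne_zero hn
  have ht : Tendsto (stirlingSeq ∘ Nat.succ) atTop (𝓝 (Real.sqrt Real.pi)) :=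
    tendsto_stirlingSeq_sqrt_pi.comp (tendsto_add_atTop_nat 1)
  exact stirlingSeq'_antitone.le_of_tendsto ht m

lemma stirling_fac_eq (n : ℕ) (hn : n ≠ 0) :
    (n.factorial : ℝ) = stirlingSeq n * (Real.sqrt (2 * n) * ((n : ℝ) / Real.exp 1) ^ n) := by
  obtain ⟨m, rfl⟩ := Nat.exists_eq_succ_of_ne_zero hn
  rw [stirlingSeq, div_mul_cancel₀]
  positivity

lemma diff_le_twelfth (n : ℕ) :
    Real.log (stirlingSeq (n+1)) - Real.log (stirlingSeq (n+2)) ≤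
      1/12 * (1/(n+1 : ℝ) - 1/(n+2 : ℝ)) := by
  have hx0 : (0:ℝ) ≤ ((1 : ℝ) / (2 * ((n+1:ℕ):ℝ) + 1)) ^ 2 := sq_nonneg _
  have hx1 : ((1 : ℝ) / (2 * ((n+1:ℕ):ℝ) + 1)) ^ 2 < 1 := by
    rw [one_div, inv_pow]
    exact inv_lt_one_of_one_lt₀ (one_lt_pow₀ (by push_cast; nlinarith [Nat.cast_nonneg (α := ℝ) n])
      two_ne_zero)
  set x : ℝ := ((1 : ℝ) / (2 * ((n+1:ℕ):ℝ) + 1)) ^ 2 with hxdef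
  have hgeo : HasSum (fun k : ℕ => (1/3 : ℝ) * x ^ (k+1)) (1/3 * (x / (1 - x))) := by
    have h := (hasSum_geometric_of_lt_one hx0 hx1).mul_left ((1/3) * x)
    have he : (fun k : ℕ => (1/3:ℝ) * x ^ (k+1)) = fun k => ((1/3)*x) * x^k := by
      funext k; rw [pow_succ]; ring
    rw [he]
    have e : (1/3:ℝ) * (x / (1 - x)) = 1/3 * x * (1 - x)⁻¹ := by rw [div_eq_mul_inv]; ring
    rw [e]; exact h
  have hs := Stirling.log_stirlingSeq_diff_hasSum n
  have hle : Real.log (stirlingSeq (n+1)) - Real.log (stirlingSeq (n+2)) ≤ 1/3 * (x / (1-x)) := by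
    refine hasSum_le (fun k => ?_) hs hgeo
    have h1 : ((1:ℝ) / (2 * ((k+1:ℕ):ℝ) + 1)) ≤ 1/3 := by
      rw [div_le_div_iff₀ (by positivity) (by positivity)]
      push_cast
      nlinarith [Nat.cast_nonneg (α := ℝ) k]
    exact mul_le_mul_of_nonneg_right h1 (pow_nonneg hx0 _)
  refine hle.trans (le_of_eq ?_)
  rw [hxdef]
  have hn1 : ((n:ℝ)+1) ≠ 0 := by positivity
  have hn2 : ((n:ℝ)+2) ≠ 0 := by positivity
  have hden : (2 * ((n+1:ℕ):ℝ) + 1) ≠ 0 := by positivity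
  have h1x : (0:ℝ) < 1 - x := by linarith
  rw [hxdef] at h1x
  push_cast at h1x ⊢
  have hA : (1:ℝ) - (1/(2*((n:ℝ)+1)+1))^2 =
      (4*((n:ℝ)+1)*((n:ℝ)+2))/((2*((n:ℝ)+1)+1)^2) := by
    field_simp
    ring
  rw [hA]
  have hX : (4*((n:ℝ)+1)*((n:ℝ)+2)) ≠ 0 := by positivity
  have hden' : (2*((n:ℝ)+1)+1) ≠ 0 := by positivity
  field_simp
  ring

lemma telescope_twelfth (n : ℕ) : ∀ j : ℕ,
    Real.log (stirlingSeq (n+1)) - Real.log (stirlingSeq (n+1+j)) ≤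
      1/12 * (1/(n+1 : ℝ) - 1/((n:ℝ)+1+j)) := by
  intro j
  induction j with
  | zero => simp
  | succ j ih =>
      have hd := diff_le_twelfth (n + j)
      have e1 : n + j + 1 = n + 1 + j := by omega
      have e2 : n + j + 2 = n + 1 + (j+1) := by omega
      rw [e1, e2] at hd
      have hc : ((n + j : ℕ) : ℝ) = (n:ℝ) + j := by push_cast; ring
      rw [hc] at hd
      have e3 : ((n:ℝ) + 1 + ((j:ℕ)+1:ℕ)) = (n:ℝ) + (j:ℝ) + 2 := by push_cast; ring
      have e4 : ((n:ℝ) + (j:ℝ) + 1) = (n:ℝ) + 1 + (j:ℝ) := by ring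
      rw [e4] at hd
      push_cast at ih hd ⊢
      have e5 : ((n:ℝ)+1+((j:ℝ)+1)) = (n:ℝ)+(j:ℝ)+2 := by ring
      rw [e5]
      linarith

lemma stirlingSeq_le_sqrt_pi_exp (n : ℕ) (hn : n ≠ 0) :
    stirlingSeq n ≤ Real.sqrt Real.pi * Real.exp (1/(12 * (n:ℝ))) := by
  obtain ⟨m, rfl⟩ := Nat.exists_eq_succ_of_ne_zero hn
  have hπ : Real.sqrt Real.pi ≠ 0 := by positivity
  have ht : Tendsto (fun j : ℕ => Real.log (stirlingSeq (m+1+j))) atTop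
      (𝓝 (Real.log (Real.sqrt Real.pi))) := by
    have h1 : Tendsto (fun j : ℕ => stirlingSeq (m+1+j)) atTop (𝓝 (Real.sqrt Real.pi)) := by
      have := tendsto_stirlingSeq_sqrt_pi.comp (tendsto_add_atTop_nat (m+1))
      simpa [Function.comp_def, Nat.add_comm] using this
    exact (Real.continuousAt_log hπ).tendsto.comp h1
  have hev : ∀ j : ℕ, Real.log (stirlingSeq (m+1)) - 1/(12 * ((m:ℝ)+1)) ≤
      Real.log (stirlingSeq (m+1+j)) := by
    intro j
    have h := telescope_twelfth m j
    have hj : (0:ℝ) ≤ 1/((m:ℝ)+1+j) := by positivity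
    have e : (1:ℝ)/(12*((m:ℝ)+1)) = 1/12 * (1/((m:ℝ)+1)) := by
      have h0 : ((m:ℝ)+1) ≠ 0 := by positivity
      field_simp
    nlinarith
  have hle : Real.log (stirlingSeq (m+1)) - 1/(12 * ((m:ℝ)+1)) ≤ Real.log (Real.sqrt Real.pi) :=
    ge_of_tendsto ht (Filter.Eventually.of_forall hev)
  have hpos : 0 < stirlingSeq (m+1) := Stirling.stirlingSeq'_pos m
  have h2 : Real.log (stirlingSeq (m+1)) ≤
      Real.log (Real.sqrt Real.pi) + 1/(12 * ((m:ℝ)+1)) := by linarith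
  have := Real.exp_le_exp.mpr h2
  rw [Real.exp_log hpos, Real.exp_add, Real.exp_log (by positivity)] at this
  have hc : ((Nat.succ m : ℕ) : ℝ) = (m:ℝ) + 1 := by push_cast; ring
  rw [hc]
  exact this

lemma stirling_lower (n : ℕ) (hn : n ≠ 0) :
    Real.sqrt (2 * Real.pi * n) * ((n : ℝ) / Real.exp 1) ^ n ≤ n.factorial := by
  rw [stirling_fac_eq n hn]
  have h2 : Real.sqrt (2 * Real.pi * n) = Real.sqrt Real.pi * Real.sqrt (2 * n) := by
    rw [← Real.sqrt_mul (by positivity)]; ring_nf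
  rw [h2, mul_assoc]
  have hpow : (0:ℝ) ≤ Real.sqrt (2*n) * (((n:ℕ):ℝ) / Real.exp 1) ^ n := by positivity
  exact mul_le_mul_of_nonneg_right (stirlingSeq_ge_sqrt_pi n hn) hpow

lemma stirling_upper (n : ℕ) (hn : n ≠ 0) :
    (n.factorial : ℝ) ≤
      Real.sqrt (2 * Real.pi * n) * ((n : ℝ) / Real.exp 1) ^ n * Real.exp (1 / (12 * n)) := by
  rw [stirling_fac_eq n hn]
  have h2 : Real.sqrt (2 * Real.pi * n) = Real.sqrt Real.pi * Real.sqrt (2 * n) := by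
    rw [← Real.sqrt_mul (by positivity)]; ring_nf
  rw [h2]
  have hpow : (0:ℝ) ≤ Real.sqrt (2*n) * (((n:ℕ):ℝ) / Real.exp 1) ^ n := by positivity
  calc stirlingSeq n * (Real.sqrt (2*n) * (((n:ℕ):ℝ) / Real.exp 1) ^ n)
      ≤ (Real.sqrt Real.pi * Real.exp (1/(12*(n:ℝ)))) *
          (Real.sqrt (2*n) * (((n:ℕ):ℝ) / Real.exp 1) ^ n) :=
        mul_le_mul_of_nonneg_right (stirlingSeq_le_sqrt_pi_exp n hn) hpow
    _ = Real.sqrt Real.pi * Real.sqrt (2*n) * (((n:ℕ):ℝ) / Real.exp 1) ^ n *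
          Real.exp (1/(12*(n:ℝ))) := by ring
end StirlingPart

section ChoosePart
open Real

lemma choose_bound (k j : ℕ) (hk : k ≠ 0) (hj : j ≠ 0) :
    ((k+j).choose k : ℝ) * (k:ℝ)^k * (j:ℝ)^j / ((k+j:ℕ):ℝ)^(k+j) ≤
      Real.exp (1/(12*((k+j:ℕ):ℝ))) * Real.sqrt (((k+j:ℕ):ℝ) / (2*Real.pi)) *
        (1/Real.sqrt ((k:ℝ)*(j:ℝ))) := by
  have hk0 : (0:ℝ) < k := by exact_mod_cast Nat.pos_of_ne_zero hk
  have hj0 : (0:ℝ) < j := by exact_mod_cast Nat.pos_of_ne_zero hj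
  have hn0 : (0:ℝ) < ((k+j:ℕ):ℝ) := by positivity
  set en : ℝ := Real.exp 1 with hen
  have hen0 : 0 < en := Real.exp_pos 1
  set E : ℝ := Real.exp (1/(12*((k+j:ℕ):ℝ))) with hE
  have hE0 : 0 < E := Real.exp_pos _
  set a : ℝ := Real.sqrt (2*Real.pi*((k+j:ℕ):ℝ)) with ha
  set b : ℝ := Real.sqrt (2*Real.pi*(k:ℝ)) with hb
  set c : ℝ := Real.sqrt (2*Real.pi*(j:ℝ)) with hc
  have ha0 : 0 < a := Real.sqrt_pos.mpr (by positivity)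
  have hb0 : 0 < b := Real.sqrt_pos.mpr (by positivity)
  have hc0 : 0 < c := Real.sqrt_pos.mpr (by positivity)
  have hfac : ((k+j).choose k : ℝ) = ((k+j).factorial : ℝ) /
      ((k.factorial : ℝ) * (j.factorial : ℝ)) := by
    have h := Nat.choose_mul_factorial_mul_factorial (Nat.le_add_right k j)
    have h2 : k + j - k = j := by omega
    rw [h2] at h
    have hnat : (k+j).choose k * (k.factorial * j.factorial) = (k+j).factorial := by
      rw [← mul_assoc]; exact h
    field_simp
    exact_mod_cast h
  have h1 : ((k+j).factorial : ℝ) ≤ a * (((k+j:ℕ):ℝ)/en)^(k+j) * E :=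
    stirling_upper (k+j) (by omega)
  have h2 : b * ((k:ℝ)/en)^k ≤ (k.factorial : ℝ) := stirling_lower k hk
  have h3 : c * ((j:ℝ)/en)^j ≤ (j.factorial : ℝ) := stirling_lower j hj
  have hA : ((k+j).choose k : ℝ) ≤
      (a * (((k+j:ℕ):ℝ)/en)^(k+j) * E) / ((b * ((k:ℝ)/en)^k) * (c * ((j:ℝ)/en)^j)) := by
    rw [hfac]
    have hd0 : 0 < (b * ((k:ℝ)/en)^k) * (c * ((j:ℝ)/en)^j) := by positivity
    exact div_le_div₀ (by positivity) h1 hd0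
      (mul_le_mul h2 h3 (by positivity) (Nat.cast_nonneg _))
  have hsqrt : Real.sqrt (((k+j:ℕ):ℝ) / (2*Real.pi)) * (1/Real.sqrt ((k:ℝ)*(j:ℝ)))
      = a / (b * c) := by
    rw [ha, hb, hc,
      ← Real.sqrt_mul (by positivity : (0:ℝ) ≤ 2*Real.pi*(k:ℝ)) (2*Real.pi*(j:ℝ)),
      ← Real.sqrt_div (by positivity : (0:ℝ) ≤ 2*Real.pi*((k+j:ℕ):ℝ)),
      one_div, ← Real.sqrt_inv, ← Real.sqrt_mul (by positivity)]
    congr 1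
    field_simp
  have hmain : ((k+j).choose k : ℝ) * (k:ℝ)^k * (j:ℝ)^j / ((k+j:ℕ):ℝ)^(k+j)
      ≤ E * (a / (b * c)) := by
    have hm : (0:ℝ) ≤ (k:ℝ)^k * (j:ℝ)^j / ((k+j:ℕ):ℝ)^(k+j) := by positivity
    have hkey : ((k+j).choose k : ℝ) * (k:ℝ)^k * (j:ℝ)^j / ((k+j:ℕ):ℝ)^(k+j) ≤
        ((a * (((k+j:ℕ):ℝ)/en)^(k+j) * E) / ((b * ((k:ℝ)/en)^k) * (c * ((j:ℝ)/en)^j)))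
          * ((k:ℝ)^k * (j:ℝ)^j / ((k+j:ℕ):ℝ)^(k+j)) := by
      calc ((k+j).choose k : ℝ) * (k:ℝ)^k * (j:ℝ)^j / ((k+j:ℕ):ℝ)^(k+j)
          = ((k+j).choose k : ℝ) * ((k:ℝ)^k * (j:ℝ)^j / ((k+j:ℕ):ℝ)^(k+j)) := by ring
        _ ≤ _ := mul_le_mul_of_nonneg_right hA hm
    refine hkey.trans (le_of_eq ?_)
    have hpw : ∀ (x : ℝ) (m : ℕ), (x/en)^m = x^m/en^m := fun x m => div_pow x en m
    rw [hpw, hpw, hpw]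
    have hee : en^(k+j) = en^k * en^j := pow_add en k j
    field_simp
    rw [hee]
  calc ((k+j).choose k : ℝ) * (k:ℝ)^k * (j:ℝ)^j / ((k+j:ℕ):ℝ)^(k+j)
      ≤ E * (a / (b * c)) := hmain
    _ = E * (Real.sqrt (((k+j:ℕ):ℝ) / (2*Real.pi)) * (1/Real.sqrt ((k:ℝ)*(j:ℝ)))) := by
        rw [hsqrt]
    _ = E * Real.sqrt (((k+j:ℕ):ℝ) / (2*Real.pi)) * (1/Real.sqrt ((k:ℝ)*(j:ℝ))) := by ring
end ChoosePart

section SumPiPart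
open Real

section SumPi
variable (c : ℝ)

/-- midpoint convexity-type inequality, proved by bare hands -/
lemma inv_sqrt_midpoint (Mr k x : ℝ) (hk0 : 0 < k) (hkM : k < Mr)
    (hx1 : k ≤ x) (hx2 : x ≤ k + 1/2) (hxM : x < Mr) (hy0 : 0 < 2*k - x) :
    2 * (1 / Real.sqrt (k * (Mr - k))) ≤
      1 / Real.sqrt (x * (Mr - x)) + 1 / Real.sqrt ((2*k - x) * (Mr - (2*k - x))) := by
  set y : ℝ := 2*k - x with hy
  have hyM : y < Mr := by rw [hy]; linarith
  have hA2 : 0 < x * (Mr - x) := by nlinarith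
  have hB2 : 0 < y * (Mr - y) := by nlinarith
  have hC2 : 0 < k * (Mr - k) := by nlinarith
  set A := Real.sqrt (x * (Mr - x)) with hA
  set B := Real.sqrt (y * (Mr - y)) with hB
  set C := Real.sqrt (k * (Mr - k)) with hC
  have hA0 : 0 < A := Real.sqrt_pos.mpr hA2
  have hB0 : 0 < B := Real.sqrt_pos.mpr hB2
  have hC0 : 0 < C := Real.sqrt_pos.mpr hC2
  have hAs : A^2 = x * (Mr - x) := Real.sq_sqrt hA2.le
  have hBs : B^2 = y * (Mr - y) := Real.sq_sqrt hB2.le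
  have hCs : C^2 = k * (Mr - k) := Real.sq_sqrt hC2.le
  -- C² ≥ (A² + B²)/2  since  k(Mr−k) − (x(Mr−x)+y(Mr−y))/2 = (x−y)²/4
  have hkey : C^2 ≥ (A^2 + B^2)/2 := by
    rw [hAs, hBs, hCs]
    have hk2 : k = (x + y)/2 := by rw [hy]; ring
    nlinarith [sq_nonneg (x - y)]
  -- 2C ≥ A + B
  have h2C : A + B ≤ 2*C := by nlinarith [sq_nonneg (A - B), sq_nonneg (A + B - 2*C)]
  -- conclude
  rw [div_add_div _ _ (ne_of_gt hA0) (ne_of_gt hB0), mul_one_div, div_le_div_iff₀ hC0 (by positivity)]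
  nlinarith [sq_nonneg (A - B)]

lemma g_intervalIntegrable (Mr : ℝ) {a b : ℝ} (ha : 0 < a) (hab : a ≤ b) (hb : b < Mr) :
    IntervalIntegrable (fun x => 1 / Real.sqrt (x * (Mr - x))) MeasureTheory.volume a b := by
  apply ContinuousOn.intervalIntegrable
  intro x hx
  rw [Set.uIcc_of_le hab] at hx
  have hx0 : 0 < x * (Mr - x) := by
    obtain ⟨h1, h2⟩ := hx
    nlinarith
  apply ContinuousAt.continuousWithinAt
  have hs : ContinuousAt (fun x : ℝ => Real.sqrt (x * (Mr - x))) x :=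
    (Real.continuous_sqrt.comp (by continuity)).continuousAt
  exact continuousAt_const.div hs (Real.sqrt_pos.mpr hx0).ne'

lemma g_integral_eq (Mr : ℝ) {a b : ℝ} (ha : 0 < a) (hab : a ≤ b) (hb : b < Mr) :
    ∫ x in a..b, 1 / Real.sqrt (x * (Mr - x)) =
      Real.arcsin (2*b/Mr - 1) - Real.arcsin (2*a/Mr - 1) := by
  have hM0 : 0 < Mr := lt_of_le_of_lt (by linarith) hb
  refine intervalIntegral.integral_eq_sub_of_hasDerivAt (f := fun x => Real.arcsin (2*x/Mr - 1))
    (fun x hx => ?_) (g_intervalIntegrable Mr ha hab hb)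
  rw [Set.uIcc_of_le hab] at hx
  obtain ⟨hx1, hx2⟩ := hx
  have hx0 : 0 < x := lt_of_lt_of_le ha hx1
  have hxM : x < Mr := lt_of_le_of_lt hx2 hb
  have hu1 : 2*x/Mr - 1 ≠ -1 := by
    intro h
    have h' : 2*x/Mr = 0 := by linarith
    rw [div_eq_zero_iff] at h'
    rcases h' with h' | h' <;> linarith
  have hu2 : 2*x/Mr - 1 ≠ 1 := by
    intro h
    have h2 : 2*x/Mr = 2 := by linarith
    rw [div_eq_iff hM0.ne'] at h2
    linarith
  have harc : HasDerivAt Real.arcsin (1 / Real.sqrt (1 - (2*x/Mr - 1)^2)) (2*x/Mr - 1) :=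
    Real.hasDerivAt_arcsin hu1 hu2
  have hu : HasDerivAt (fun x : ℝ => 2*x/Mr - 1) (2/Mr) x := by
    simpa using (((hasDerivAt_id x).const_mul 2).div_const Mr).sub_const 1
  have hcomp := harc.comp x hu
  refine hcomp.congr_deriv (Eq.symm ?_)
  have he : 1 - (2*x/Mr - 1)^2 = (2/Mr)^2 * (x * (Mr - x)) := by
    field_simp
    ring
  show (1 : ℝ) / Real.sqrt (x * (Mr - x)) = 1 / Real.sqrt (1 - (2*x/Mr-1)^2) * (2/Mr)
  rw [he, Real.sqrt_mul (show (0:ℝ) ≤ (2/Mr)^2 by positivity) (x*(Mr-x)),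
    Real.sqrt_sq (by positivity : (0:ℝ) ≤ 2/Mr)]
  have hs0 : Real.sqrt (x * (Mr - x)) ≠ 0 := (Real.sqrt_pos.mpr (by nlinarith)).ne'
  have hsx : Real.sqrt x ≠ 0 := (Real.sqrt_pos.mpr hx0).ne'
  have hsmx : Real.sqrt (Mr - x) ≠ 0 := (Real.sqrt_pos.mpr (by linarith)).ne'
  field_simp

lemma g_refl_intervalIntegrable (Mr : ℝ) {a b c : ℝ} (hab : a ≤ b)
    (h1 : 0 < c - b) (h2 : c - a < Mr) :
    IntervalIntegrable (fun x => 1 / Real.sqrt ((c - x) * (Mr - (c - x))))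
      MeasureTheory.volume a b := by
  apply ContinuousOn.intervalIntegrable
  intro x hx
  rw [Set.uIcc_of_le hab] at hx
  obtain ⟨hx1, hx2⟩ := hx
  have hx0 : 0 < (c - x) * (Mr - (c - x)) := by nlinarith
  apply ContinuousAt.continuousWithinAt
  have hs : ContinuousAt (fun x : ℝ => Real.sqrt ((c - x) * (Mr - (c - x)))) x :=
    (Real.continuous_sqrt.comp (by continuity)).continuousAt
  exact continuousAt_const.div hs (Real.sqrt_pos.mpr hx0).ne'

lemma g_midpoint_le (Mr : ℝ) (k : ℝ) (hk : 1 ≤ k) (hkM : k ≤ Mr - 1) :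
    1 / Real.sqrt (k * (Mr - k)) ≤
      ∫ x in (k - 1/2)..(k + 1/2), 1 / Real.sqrt (x * (Mr - x)) := by
  have hM2 : 2 ≤ Mr := by linarith
  have hi1 : IntervalIntegrable (fun x => 1 / Real.sqrt (x * (Mr - x)))
      MeasureTheory.volume (k - 1/2) k :=
    g_intervalIntegrable Mr (by linarith) (by linarith) (by linarith)
  have hi2 : IntervalIntegrable (fun x => 1 / Real.sqrt (x * (Mr - x)))
      MeasureTheory.volume k (k + 1/2) :=
    g_intervalIntegrable Mr (by linarith) (by linarith) (by linarith)
  have hi1' : IntervalIntegrable (fun x => 1 / Real.sqrt ((2*k - x) * (Mr - (2*k - x))))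
      MeasureTheory.volume k (k + 1/2) :=
    g_refl_intervalIntegrable Mr (by linarith) (by linarith) (by linarith)
  rw [← intervalIntegral.integral_add_adjacent_intervals hi1 hi2]
  have hrefl : ∫ x in (k - 1/2)..k, 1 / Real.sqrt (x * (Mr - x)) =
      ∫ x in k..(k + 1/2), 1 / Real.sqrt ((2*k - x) * (Mr - (2*k - x))) := by
    have h := intervalIntegral.integral_comp_sub_left (a := k) (b := k + 1/2)
      (fun x => 1 / Real.sqrt (x * (Mr - x))) (2*k)
    have e1 : 2*k - (k + 1/2) = k - 1/2 := by ring
    have e2 : 2*k - k = k := by ring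
    rw [e1, e2] at h
    exact h.symm
  rw [hrefl, ← intervalIntegral.integral_add hi1' hi2]
  have hconst : 1 / Real.sqrt (k * (Mr - k)) =
      ∫ _x in k..(k + 1/2), 2 * (1 / Real.sqrt (k * (Mr - k))) := by
    rw [intervalIntegral.integral_const]
    have : k + 1/2 - k = 1/2 := by ring
    rw [this]
    rw [smul_eq_mul]
    ring
  rw [hconst]
  apply intervalIntegral.integral_mono_on (by linarith)
  · exact intervalIntegrable_const
  · exact hi1'.add hi2
  · intro x hx
    obtain ⟨hx1, hx2⟩ := hx
    have h := inv_sqrt_midpoint Mr k x (by linarith) (by linarith) hx1 hx2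
      (by linarith) (by linarith)
    linarith

set_option maxHeartbeats 1000000 in
lemma sum_inv_sqrt_le_pi (M : ℕ) (hM : 2 ≤ M) :
    ∑ k ∈ Finset.Ico 1 M, (1:ℝ) / Real.sqrt ((k:ℝ) * ((M:ℝ) - (k:ℝ))) ≤ Real.pi := by
  have hM0 : (2:ℝ) ≤ (M:ℝ) := by exact_mod_cast hM
  have h1M : 1 ≤ M := by omega
  have hMm1 : ((M - 1 : ℕ):ℝ) = (M:ℝ) - 1 := by
    push_cast [Nat.cast_sub h1M]; ring
  set a : ℕ → ℝ := fun i => 1/2 + i with ha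
  have hint : ∀ i, i < M - 1 → IntervalIntegrable
      (fun x => 1 / Real.sqrt (x * ((M:ℝ) - x))) MeasureTheory.volume (a i) (a (i+1)) := by
    intro i hi
    have hi' : (i:ℝ) + 1 ≤ (M:ℝ) - 1 := by
      have h2 : ((i:ℝ) + 1) ≤ ((M - 1 : ℕ):ℝ) := by exact_mod_cast Nat.succ_le_of_lt hi
      linarith [hMm1 ▸ h2]
    refine g_intervalIntegrable (M:ℝ) ?_ ?_ ?_ <;> rw [ha] <;> push_cast <;> [positivity; linarith; linarith]
  have hstep : ∀ i ∈ Finset.range (M - 1),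
      (1:ℝ) / Real.sqrt ((↑(1 + i):ℝ) * ((M:ℝ) - (↑(1 + i):ℝ))) ≤
        ∫ x in (a i)..(a (i+1)), 1 / Real.sqrt (x * ((M:ℝ) - x)) := by
    intro i hi
    rw [Finset.mem_range] at hi
    have hi' : (i:ℝ) + 1 ≤ (M:ℝ) - 1 := by
      have h2 : ((i:ℝ) + 1) ≤ ((M - 1 : ℕ):ℝ) := by exact_mod_cast Nat.succ_le_of_lt hi
      linarith [hMm1 ▸ h2]
    have h := g_midpoint_le (M:ℝ) ((1:ℝ) + i) (by linarith [Nat.cast_nonneg (α := ℝ) i]) (by linarith)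
    have e1 : (1:ℝ) + (i:ℝ) - 1/2 = a i := by rw [ha]; push_cast; ring
    have e2 : (1:ℝ) + (i:ℝ) + 1/2 = a (i+1) := by rw [ha]; push_cast; ring
    rw [e1, e2] at h
    have e3 : ((↑(1 + i) : ℝ)) = (1:ℝ) + (i:ℝ) := by push_cast; ring
    rw [e3]
    exact h
  rw [Finset.sum_Ico_eq_sum_range]
  have hsum := intervalIntegral.sum_integral_adjacent_intervals (a := a) (μ := MeasureTheory.volume)
    (n := M - 1) (f := fun x => 1 / Real.sqrt (x * ((M:ℝ) - x))) hint
  calc ∑ i ∈ Finset.range (M - 1), (1:ℝ) / Real.sqrt ((↑(1 + i):ℝ) * ((M:ℝ) - (↑(1 + i):ℝ)))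
      ≤ ∑ i ∈ Finset.range (M - 1),
          ∫ x in (a i)..(a (i+1)), 1 / Real.sqrt (x * ((M:ℝ) - x)) :=
        Finset.sum_le_sum hstep
    _ = ∫ x in (a 0)..(a (M-1)), 1 / Real.sqrt (x * ((M:ℝ) - x)) := hsum
    _ ≤ Real.pi := by
        have e0 : a 0 = 1/2 := by rw [ha]; norm_num
        have eM : a (M-1) = (M:ℝ) - 1/2 := by
          simp only [ha]
          rw [hMm1]; ring
        rw [e0, eM]
        rw [g_integral_eq (M:ℝ) (by norm_num) (by linarith) (by linarith)]
        have h1 : Real.arcsin (2*((M:ℝ) - 1/2)/(M:ℝ) - 1) ≤ Real.pi/2 :=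
          Real.arcsin_le_pi_div_two _
        have h2 : -(Real.pi/2) ≤ Real.arcsin (2*(1/2:ℝ)/(M:ℝ) - 1) :=
          Real.neg_pi_div_two_le_arcsin _
        linarith

end SumPi
end SumPiPart

section BinomPart
open MeasureTheory Finset
open Finset

lemma pascal_sum (M : ℕ) (p q : ℝ) (G : ℝ → ℝ) :
    q * (∑ k ∈ range (M+1), (M.choose k : ℝ) * p^k * q^(M-k) * G k)
      + p * (∑ k ∈ range (M+1), (M.choose k : ℝ) * p^k * q^(M-k) * G (k+1))
    = ∑ k ∈ range (M+2), ((M+1).choose k : ℝ) * p^k * q^(M+1-k) * G k := by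
  -- RHS: peel k = 0
  rw [Finset.sum_range_succ' _ (M+1)]
  push_cast
  have hN : ∀ i, ((M+1).choose (i+1) : ℝ) = (M.choose i : ℝ) + (M.choose (i+1) : ℝ) := by
    intro i
    exact_mod_cast congrArg (Nat.cast (R := ℝ)) (Nat.choose_succ_succ (M) (i))
  have hsub : ∀ i, M + 1 - (i+1) = M - i := fun i => by omega
  have hRHS : ∑ i ∈ range (M+1), ((M+1).choose (i+1) : ℝ) * p^(i+1) * q^(M-i) * G ((i:ℝ)+1)
      = (∑ i ∈ range (M+1), (M.choose i : ℝ) * p^(i+1) * q^(M-i) * G ((i:ℝ)+1))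
        + ∑ i ∈ range (M+1), (M.choose (i+1) : ℝ) * p^(i+1) * q^(M-i) * G ((i:ℝ)+1) := by
    rw [← Finset.sum_add_distrib]
    apply Finset.sum_congr rfl
    intro i _
    rw [hN i]
    ring
  rw [hRHS]
  -- p-part
  have hp : p * (∑ k ∈ range (M+1), (M.choose k : ℝ) * p^k * q^(M-k) * G (k+1))
      = ∑ i ∈ range (M+1), (M.choose i : ℝ) * p^(i+1) * q^(M-i) * G ((i:ℝ)+1) := by
    rw [Finset.mul_sum]
    apply Finset.sum_congr rfl
    intro i _
    rw [pow_succ]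
    push_cast
    ring
  -- q-part
  have hq : q * (∑ k ∈ range (M+1), (M.choose k : ℝ) * p^k * q^(M-k) * G k)
      = (∑ i ∈ range (M+1), (M.choose (i+1) : ℝ) * p^(i+1) * q^(M-i) * G ((i:ℝ)+1))
        + q^(M+1) * G 0 := by
    rw [Finset.sum_range_succ' _ M, mul_add, Finset.mul_sum]
    congr 1
    · -- middle terms
      rw [Finset.sum_range_succ]
      have hlast : ((M.choose (M+1)) : ℝ) * p^(M+1) * q^(M-M) * G (M+1) = 0 := by
        rw [Nat.choose_succ_self]
        norm_num
      rw [hlast, add_zero]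
      apply Finset.sum_congr rfl
      intro i hi
      rw [Finset.mem_range] at hi
      have he : M - i = (M - (i+1)) + 1 := by omega
      rw [he, pow_succ]
      push_cast
      ring
    · simp
      rw [pow_succ]
      ring
  rw [hp, hq]
  simp only [Nat.choose_zero_right, Nat.cast_one, pow_zero]
  ring

variable {Z0 : Type*} [MeasurableSpace Z0]

lemma measurable_sum_comp (μ : Measure Z0) (f : Z0 → ℝ) (hf : Measurable f) (M : ℕ)
    (G : ℝ → ℝ) (hGc : Continuous G) :
    Measurable (fun z : Fin M → Z0 => G (∑ v, f (z v))) := by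
  apply hGc.measurable.comp
  exact Finset.measurable_sum univ (fun v _ => hf.comp (measurable_pi_apply v))

lemma integrable_comp_sum (μ : Measure Z0) [IsProbabilityMeasure μ]
    (f : Z0 → ℝ) (hf : Measurable f) (hf0 : ∀ x, 0 ≤ f x) (hf1 : ∀ x, f x ≤ 1)
    (M : ℕ) (G : ℝ → ℝ) (hGc : Continuous G) :
    Integrable (fun z : Fin M → Z0 => G (∑ v, f (z v))) (Measure.pi fun _ : Fin M => μ) := by
  obtain ⟨C, hC⟩ := (isCompact_Icc : IsCompact (Set.Icc (0:ℝ) M)).exists_bound_of_continuousOn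
    hGc.continuousOn
  have hmem : ∀ z : Fin M → Z0, (∑ v, f (z v)) ∈ Set.Icc (0:ℝ) M := by
    intro z
    constructor
    · exact Finset.sum_nonneg fun v _ => hf0 _
    · calc ∑ v, f (z v) ≤ ∑ _v : Fin M, (1:ℝ) := Finset.sum_le_sum fun v _ => hf1 _
        _ = M := by simp
  apply Integrable.mono' (integrable_const C)
    (measurable_sum_comp μ f hf M G hGc).aestronglyMeasurable
  exact Filter.Eventually.of_forall fun z => hC _ (hmem z)

theorem binom_convex_bound (μ : Measure Z0) [IsProbabilityMeasure μ]
    (f : Z0 → ℝ) (hf : Measurable f) (hf0 : ∀ x, 0 ≤ f x) (hf1 : ∀ x, f x ≤ 1) :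
    ∀ (M : ℕ) (G : ℝ → ℝ), Continuous G → ConvexOn ℝ (Set.Icc (0:ℝ) (M:ℝ)) G →
    ∫ z : Fin M → Z0, G (∑ v, f (z v)) ∂(Measure.pi fun _ : Fin M => μ) ≤
      ∑ k ∈ range (M+1), (M.choose k : ℝ) * (∫ x, f x ∂μ)^k *
        (1 - ∫ x, f x ∂μ)^(M-k) * G k := by
  have hfint : Integrable f μ :=
    Integrable.mono' (integrable_const 1) hf.aestronglyMeasurable
      (Filter.Eventually.of_forall fun x => by
        rw [Real.norm_eq_abs, abs_of_nonneg (hf0 x)]; exact hf1 x)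
  set p : ℝ := ∫ x, f x ∂μ with hp
  have hp0 : 0 ≤ p := integral_nonneg hf0
  have hp1 : p ≤ 1 := by
    calc p ≤ ∫ _x, (1:ℝ) ∂μ := integral_mono hfint (integrable_const 1) hf1
      _ = 1 := by simp
  intro M
  induction M with
  | zero =>
      intro G hGc hG
      simp [integral_const]
  | succ M ih =>
      intro G hGc hG
      set q : ℝ := 1 - p with hq
      -- the sum-membership fact
      have hmem : ∀ z : Fin M → Z0, (∑ v, f (z v)) ∈ Set.Icc (0:ℝ) M := by
        intro z
        constructor
        · exact Finset.sum_nonneg fun v _ => hf0 _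
        · calc ∑ v, f (z v) ≤ ∑ _v : Fin M, (1:ℝ) := Finset.sum_le_sum fun v _ => hf1 _
            _ = M := by simp
      -- change of variables to product
      have hmp := measurePreserving_piFinSuccAbove (fun _ : Fin (M+1) => μ) 0
      have hstep1 : ∫ z : Fin (M+1) → Z0, G (∑ v, f (z v)) ∂(Measure.pi fun _ => μ)
          = ∫ x : Z0 × (Fin M → Z0), G (f x.1 + ∑ v, f (x.2 v))
              ∂(μ.prod (Measure.pi fun _ : Fin M => μ)) := by
        rw [← hmp.integral_comp (MeasurableEquiv.piFinSuccAbove (fun _ => Z0) 0).measurableEmbedding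
          (fun x : Z0 × (Fin M → Z0) => G (f x.1 + ∑ v, f (x.2 v)))]
        congr 1
        funext z
        congr 1
        rw [Fin.sum_univ_succ]
        congr 1
      rw [hstep1]
      -- pointwise convexity bound
      have hpt : ∀ x : Z0 × (Fin M → Z0), G (f x.1 + ∑ v, f (x.2 v)) ≤
          (1 - f x.1) * G (∑ v, f (x.2 v)) + f x.1 * G ((∑ v, f (x.2 v)) + 1) := by
        intro x
        obtain ⟨hS0, hSM⟩ := hmem x.2
        have h1 : (∑ v, f (x.2 v)) ∈ Set.Icc (0:ℝ) ((M:ℝ)+1) := ⟨hS0, by linarith⟩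
        have h2 : ((∑ v, f (x.2 v)) + 1) ∈ Set.Icc (0:ℝ) ((M:ℝ)+1) := by
          constructor <;> [linarith; linarith]
        have hcvx := hG.2 (by
          rw [show ((M+1:ℕ):ℝ) = (M:ℝ)+1 by push_cast; ring] at *
          exact h1) (by
          rw [show ((M+1:ℕ):ℝ) = (M:ℝ)+1 by push_cast; ring] at *
          exact h2) (by linarith [hf1 x.1] : (0:ℝ) ≤ 1 - f x.1) (hf0 x.1) (by ring)
        have harg : (1 - f x.1) • (∑ v, f (x.2 v)) + f x.1 • ((∑ v, f (x.2 v)) + 1)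
            = f x.1 + ∑ v, f (x.2 v) := by
          simp only [smul_eq_mul]
          ring
        rw [harg] at hcvx
        simpa using hcvx
      -- integrability facts on the product space
      obtain ⟨C, hC⟩ := (isCompact_Icc : IsCompact (Set.Icc (0:ℝ) ((M:ℝ)+1))).exists_bound_of_continuousOn
        hGc.continuousOn
      have hCnn : 0 ≤ C := le_trans (norm_nonneg _) (hC 0 ⟨le_refl _, by positivity⟩)
      have hmS : Measurable (fun x : Z0 × (Fin M → Z0) => ∑ v, f (x.2 v)) :=
        Finset.measurable_sum univ fun v _ => hf.comp ((measurable_pi_apply v).comp measurable_snd)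
      have hmf1 : Measurable (fun x : Z0 × (Fin M → Z0) => f x.1) := hf.comp measurable_fst
      have hA : Integrable (fun x : Z0 × (Fin M → Z0) => G (f x.1 + ∑ v, f (x.2 v)))
          (μ.prod (Measure.pi fun _ : Fin M => μ)) := by
        apply Integrable.mono' (integrable_const C)
          (hGc.measurable.comp (hmf1.add hmS)).aestronglyMeasurable
        refine Filter.Eventually.of_forall fun x => ?_
        obtain ⟨hS0, hSM⟩ := hmem x.2
        refine hC _ ⟨?_, ?_⟩
        · show (0:ℝ) ≤ f x.1 + ∑ v, f (x.2 v)
          have := hf0 x.1; linarith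
        · show f x.1 + ∑ v, f (x.2 v) ≤ (M:ℝ) + 1
          have := hf1 x.1; linarith
      have hB1 : Integrable (fun x : Z0 × (Fin M → Z0) => (1 - f x.1) * G (∑ v, f (x.2 v)))
          (μ.prod (Measure.pi fun _ : Fin M => μ)) := by
        apply Integrable.mono' (integrable_const C)
          (((measurable_const.sub hmf1).mul (hGc.measurable.comp hmS)).aestronglyMeasurable)
        refine Filter.Eventually.of_forall fun x => ?_
        obtain ⟨hS0, hSM⟩ := hmem x.2
        have hb : ‖G (∑ v, f (x.2 v))‖ ≤ C := hC _ ⟨hS0, by linarith⟩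
        show ‖(1 - f x.1) * G (∑ v, f (x.2 v))‖ ≤ C
        rw [norm_mul]
        calc ‖1 - f x.1‖ * ‖G (∑ v, f (x.2 v))‖ ≤ 1 * C := by
              apply mul_le_mul _ hb (norm_nonneg _) zero_le_one
              rw [Real.norm_eq_abs, abs_of_nonneg (by linarith [hf1 x.1])]
              linarith [hf0 x.1]
          _ = C := one_mul C
      have hB2 : Integrable (fun x : Z0 × (Fin M → Z0) => f x.1 * G ((∑ v, f (x.2 v)) + 1))
          (μ.prod (Measure.pi fun _ : Fin M => μ)) := by
        apply Integrable.mono' (integrable_const C)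
          ((hmf1.mul (hGc.measurable.comp (hmS.add measurable_const))).aestronglyMeasurable)
        refine Filter.Eventually.of_forall fun x => ?_
        obtain ⟨hS0, hSM⟩ := hmem x.2
        have hb : ‖G ((∑ v, f (x.2 v)) + 1)‖ ≤ C := hC _ ⟨by linarith, by linarith⟩
        show ‖f x.1 * G ((∑ v, f (x.2 v)) + 1)‖ ≤ C
        rw [norm_mul]
        calc ‖f x.1‖ * ‖G ((∑ v, f (x.2 v)) + 1)‖ ≤ 1 * C := by
              apply mul_le_mul _ hb (norm_nonneg _) zero_le_one
              rw [Real.norm_eq_abs, abs_of_nonneg (hf0 x.1)]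
              exact hf1 x.1
          _ = C := one_mul C
      -- integrate the pointwise bound
      have hint1 : ∫ x : Z0 × (Fin M → Z0), G (f x.1 + ∑ v, f (x.2 v))
            ∂(μ.prod (Measure.pi fun _ : Fin M => μ))
          ≤ ∫ x : Z0 × (Fin M → Z0), ((1 - f x.1) * G (∑ v, f (x.2 v))
              + f x.1 * G ((∑ v, f (x.2 v)) + 1)) ∂(μ.prod (Measure.pi fun _ : Fin M => μ)) :=
        integral_mono hA (hB1.add hB2) hpt
      -- split and factor
      have hsplit : ∫ x : Z0 × (Fin M → Z0), ((1 - f x.1) * G (∑ v, f (x.2 v))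
              + f x.1 * G ((∑ v, f (x.2 v)) + 1)) ∂(μ.prod (Measure.pi fun _ : Fin M => μ))
          = q * (∫ z : Fin M → Z0, G (∑ v, f (z v)) ∂(Measure.pi fun _ : Fin M => μ))
            + p * (∫ z : Fin M → Z0, G ((∑ v, f (z v)) + 1) ∂(Measure.pi fun _ : Fin M => μ)) := by
        rw [integral_add hB1 hB2]
        congr 1
        · rw [integral_prod_mul (fun x : Z0 => 1 - f x) (fun y : Fin M → Z0 => G (∑ v, f (y v)))]
          congr 1
          rw [integral_sub (integrable_const 1) hfint]
          simp [hp, hq]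
        · rw [integral_prod_mul (fun x : Z0 => f x) (fun y : Fin M → Z0 => G ((∑ v, f (y v)) + 1))]
      -- apply the induction hypothesis to G and G(·+1)
      have hsub : Set.Icc (0:ℝ) (M:ℝ) ⊆ Set.Icc (0:ℝ) ((M+1:ℕ):ℝ) :=
        Set.Icc_subset_Icc_right (by push_cast; linarith)
      have hG1 : ConvexOn ℝ (Set.Icc (0:ℝ) (M:ℝ)) G := hG.subset hsub (convex_Icc _ _)
      have hG2 : ConvexOn ℝ (Set.Icc (0:ℝ) (M:ℝ)) (fun s => G (s+1)) := by
        refine ⟨convex_Icc _ _, ?_⟩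
        intro x hx y hy a b ha hb hab
        have hx' : x + 1 ∈ Set.Icc (0:ℝ) ((M+1:ℕ):ℝ) := by
          obtain ⟨h1, h2⟩ := hx
          constructor
          · linarith
          · push_cast; linarith
        have hy' : y + 1 ∈ Set.Icc (0:ℝ) ((M+1:ℕ):ℝ) := by
          obtain ⟨h1, h2⟩ := hy
          constructor
          · linarith
          · push_cast; linarith
        have h := hG.2 hx' hy' ha hb hab
        have e : a • (x + 1) + b • (y + 1) = a • x + b • y + 1 := by
          simp only [smul_eq_mul]
          nlinarith [hab]
        rw [e] at h
        exact h
      have hIH1 := ih G hGc hG1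
      have hIH2 := ih (fun s => G (s+1)) (hGc.comp (continuous_id.add continuous_const)) hG2
      -- combine
      have hq0 : 0 ≤ q := by rw [hq]; linarith
      calc ∫ x : Z0 × (Fin M → Z0), G (f x.1 + ∑ v, f (x.2 v))
            ∂(μ.prod (Measure.pi fun _ : Fin M => μ))
          ≤ q * (∫ z : Fin M → Z0, G (∑ v, f (z v)) ∂(Measure.pi fun _ : Fin M => μ))
            + p * (∫ z : Fin M → Z0, G ((∑ v, f (z v)) + 1) ∂(Measure.pi fun _ : Fin M => μ)) := by
            rw [← hsplit]; exact hint1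
        _ ≤ q * (∑ k ∈ range (M+1), (M.choose k : ℝ) * p^k * q^(M-k) * G k)
            + p * (∑ k ∈ range (M+1), (M.choose k : ℝ) * p^k * q^(M-k) * G (k+1)) := by
            apply add_le_add
            · apply mul_le_mul_of_nonneg_left _ hq0
              refine hIH1.trans (le_of_eq (Finset.sum_congr rfl fun k _ => by ring))
            · apply mul_le_mul_of_nonneg_left _ hp0
              refine hIH2.trans (le_of_eq (Finset.sum_congr rfl fun k _ => by push_cast; ring))
        _ = ∑ k ∈ range (M+2), ((M+1).choose k : ℝ) * p^k * q^(M+1-k) * G k :=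
            pascal_sum M p q G
        _ = ∑ k ∈ range (M+1+1), ((M+1).choose k : ℝ) * p^k * q^(M+1-k) * G k := rfl
        _ = ∑ k ∈ range (M+1+1), ((M+1).choose k : ℝ) * p^k * q^(M+1-k) * G k := rfl
end BinomPart

section GfunPart
open Finset

noncomputable def Gfun (Mr p : ℝ) (s : ℝ) : ℝ :=
  Real.exp (s * Real.log (s/(Mr*p)) + (Mr - s) * Real.log ((Mr - s)/(Mr*(1-p))))

lemma mulLogDiv_eq (c : ℝ) (hc : c ≠ 0) :
    (fun x : ℝ => x * Real.log (x/c)) = fun x => x * Real.log x - x * Real.log c := by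
  funext x
  by_cases hx : x = 0
  · simp [hx]
  · rw [Real.log_div hx hc]; ring

lemma continuous_mulLogDiv (c : ℝ) (hc : c ≠ 0) :
    Continuous (fun x : ℝ => x * Real.log (x/c)) := by
  rw [mulLogDiv_eq c hc]
  exact Real.continuous_mul_log.sub (continuous_id.mul continuous_const)

lemma continuous_Gfun (Mr p : ℝ) (h1 : Mr*p ≠ 0) (h2 : Mr*(1-p) ≠ 0) :
    Continuous (Gfun Mr p) := by
  unfold Gfun
  apply Real.continuous_exp.comp
  apply Continuous.add
  · exact continuous_mulLogDiv _ h1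
  · exact (continuous_mulLogDiv _ h2).comp (continuous_const.sub continuous_id)

lemma mulLogDiv_midpoint (c : ℝ) (hc : c ≠ 0) {x y a b : ℝ} (hx : 0 ≤ x) (hy : 0 ≤ y)
    (ha : 0 ≤ a) (hb : 0 ≤ b) (hab : a + b = 1) :
    (a*x + b*y) * Real.log ((a*x + b*y)/c) ≤
      a * (x * Real.log (x/c)) + b * (y * Real.log (y/c)) := by
  have h := Real.convexOn_mul_log.2 (Set.mem_Ici.mpr hx) (Set.mem_Ici.mpr hy) ha hb hab
  simp only [smul_eq_mul] at h
  have e : ∀ z : ℝ, z * Real.log (z/c) = z * Real.log z - z * Real.log c := by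
    intro z
    exact congrFun (mulLogDiv_eq c hc) z
  rw [e, e, e]
  nlinarith [h]

lemma convexOn_Gfun (Mr p : ℝ) (h1 : Mr*p ≠ 0) (h2 : Mr*(1-p) ≠ 0) :
    ConvexOn ℝ (Set.Icc (0:ℝ) Mr) (Gfun Mr p) := by
  refine ⟨convex_Icc _ _, ?_⟩
  intro x hx y hy a b ha hb hab
  simp only [smul_eq_mul]
  obtain ⟨hx0, hxM⟩ := hx
  obtain ⟨hy0, hyM⟩ := hy
  unfold Gfun
  set E : ℝ → ℝ := fun s => s * Real.log (s/(Mr*p)) + (Mr - s) * Real.log ((Mr - s)/(Mr*(1-p)))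
    with hE
  have hE1 : E (a*x + b*y) ≤ a * E x + b * E y := by
    have hpart1 := mulLogDiv_midpoint (Mr*p) h1 hx0 hy0 ha hb hab
    have hpart2 := mulLogDiv_midpoint (Mr*(1-p)) h2 (by linarith : (0:ℝ) ≤ Mr - x)
      (by linarith : (0:ℝ) ≤ Mr - y) ha hb hab
    have harg : a*(Mr - x) + b*(Mr - y) = Mr - (a*x + b*y) := by
      have : a*Mr + b*Mr = Mr := by rw [← add_mul, hab, one_mul]
      linarith [this]
    rw [harg] at hpart2
    simp only [hE]
    linarith
  calc Real.exp (E (a*x + b*y)) ≤ Real.exp (a * E x + b * E y) := Real.exp_le_exp.mpr hE1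
    _ ≤ a * Real.exp (E x) + b * Real.exp (E y) := by
        have h := convexOn_exp.2 (Set.mem_univ (E x)) (Set.mem_univ (E y)) ha hb hab
        simpa using h
end GfunPart

section BSumPart
open Finset

lemma binom_sum_le (M : ℕ) (hM : 2 ≤ M) (p : ℝ) (hp0 : 0 < p) (hp1 : p < 1) :
    ∑ k ∈ range (M+1), (M.choose k : ℝ) * p^k * (1-p)^(M-k) * Gfun (M:ℝ) p (k:ℝ)
      ≤ Real.exp (1/(12*(M:ℝ))) * Real.sqrt (Real.pi * M / 2) + 2 := by
  set q : ℝ := 1 - p with hqdef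
  have hq0 : 0 < q := by rw [hqdef]; linarith
  have hMr : (0:ℝ) < (M:ℝ) := by exact_mod_cast (by omega : 0 < M)
  have hMne : (M:ℝ) ≠ 0 := hMr.ne'
  -- term at 0
  have ht0 : (M.choose 0 : ℝ) * p^0 * q^(M-0) * Gfun (M:ℝ) p ((0:ℕ):ℝ) = 1 := by
    have hG : Gfun (M:ℝ) p 0 = (1/q)^M := by
      unfold Gfun
      rw [zero_mul, sub_zero, zero_add]
      have e : (M:ℝ)/((M:ℝ)*q) = 1/q := by field_simp
      rw [e, Real.exp_nat_mul, Real.exp_log (by positivity)]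
    simp only [Nat.cast_zero, hG]
    simp only [Nat.choose_zero_right, Nat.cast_one, pow_zero, Nat.sub_zero]
    rw [show (1:ℝ)*1*q^M*(1/q)^M = q^M*(1/q)^M by ring, ← mul_pow,
      mul_one_div_cancel hq0.ne', one_pow]
  -- term at M
  have htM : (M.choose M : ℝ) * p^M * q^(M-M) * Gfun (M:ℝ) p ((M:ℕ):ℝ) = 1 := by
    have hG : Gfun (M:ℝ) p (M:ℝ) = (1/p)^M := by
      unfold Gfun
      rw [sub_self, zero_mul, add_zero]
      have e : (M:ℝ)/((M:ℝ)*p) = 1/p := by field_simp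
      rw [e, Real.exp_nat_mul, Real.exp_log (by positivity)]
    rw [hG, Nat.choose_self, Nat.sub_self, pow_zero]
    push_cast
    rw [show (1:ℝ)*p^M*1*(1/p)^M = p^M*(1/p)^M by ring, ← mul_pow,
      mul_one_div_cancel hp0.ne', one_pow]
  -- middle terms
  have hmid : ∀ k ∈ Ico 1 M, (M.choose k : ℝ) * p^k * q^(M-k) * Gfun (M:ℝ) p ((k:ℕ):ℝ)
      ≤ Real.exp (1/(12*(M:ℝ))) * Real.sqrt ((M:ℝ)/(2*Real.pi)) *
          (1/Real.sqrt ((k:ℝ) * ((M:ℝ) - (k:ℝ)))) := by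
    intro k hk
    rw [Finset.mem_Ico] at hk
    obtain ⟨hk1, hkM⟩ := hk
    set j : ℕ := M - k with hj
    have hkj : k + j = M := by omega
    have hj1 : 1 ≤ j := by omega
    have hk0 : (0:ℝ) < (k:ℝ) := by exact_mod_cast hk1
    have hj0 : (0:ℝ) < (j:ℝ) := by exact_mod_cast hj1
    have hcastj : ((j:ℕ):ℝ) = (M:ℝ) - (k:ℝ) := by
      rw [hj]
      push_cast [Nat.cast_sub (le_of_lt hkM)]
      ring
    -- evaluate Gfun at k
    have hG : Gfun (M:ℝ) p (k:ℝ) = ((k:ℝ)/((M:ℝ)*p))^k * (((j:ℕ):ℝ)/((M:ℝ)*q))^j := by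
      unfold Gfun
      rw [Real.exp_add, ← hcastj]
      rw [Real.exp_nat_mul, Real.exp_nat_mul,
        Real.exp_log (by positivity), Real.exp_log (by positivity)]
    rw [hG]
    -- collapse powers
    have hcollapse : (M.choose k : ℝ) * p^k * q^(M-k) * (((k:ℝ)/((M:ℝ)*p))^k * (((j:ℕ):ℝ)/((M:ℝ)*q))^j)
        = (M.choose k : ℝ) * (k:ℝ)^k * (j:ℝ)^j / ((M:ℝ))^(M) := by
      rw [← hj]
      have e1 : p^k * ((k:ℝ)/((M:ℝ)*p))^k = ((k:ℝ)/(M:ℝ))^k := by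
        rw [← mul_pow]
        congr 1
        field_simp
      have e2 : q^j * (((j:ℕ):ℝ)/((M:ℝ)*q))^j = ((j:ℝ)/(M:ℝ))^j := by
        rw [← mul_pow]
        congr 1
        field_simp
      calc (M.choose k : ℝ) * p^k * q^j * (((k:ℝ)/((M:ℝ)*p))^k * (((j:ℕ):ℝ)/((M:ℝ)*q))^j)
          = (M.choose k : ℝ) * (p^k * ((k:ℝ)/((M:ℝ)*p))^k) * (q^j * (((j:ℕ):ℝ)/((M:ℝ)*q))^j) := by
            ring
        _ = (M.choose k : ℝ) * ((k:ℝ)/(M:ℝ))^k * ((j:ℝ)/(M:ℝ))^j := by rw [e1, e2]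
        _ = (M.choose k : ℝ) * (k:ℝ)^k * (j:ℝ)^j / ((M:ℝ))^M := by
            rw [div_pow, div_pow]
            rw [← hkj, pow_add]
            field_simp
    rw [hcollapse, ← hcastj]
    -- apply choose_bound
    have hcb := choose_bound k j (by omega) (by omega)
    rw [hkj] at hcb
    exact hcb
  -- split the sum
  have hsplit : ∑ k ∈ range (M+1), (M.choose k : ℝ) * p^k * q^(M-k) * Gfun (M:ℝ) p (k:ℝ)
      = ((M.choose 0 : ℝ) * p^0 * q^(M-0) * Gfun (M:ℝ) p ((0:ℕ):ℝ))
        + (∑ k ∈ Ico 1 M, (M.choose k : ℝ) * p^k * q^(M-k) * Gfun (M:ℝ) p ((k:ℕ):ℝ))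
        + ((M.choose M : ℝ) * p^M * q^(M-M) * Gfun (M:ℝ) p ((M:ℕ):ℝ)) := by
    rw [Finset.sum_range_succ]
    congr 1
    rw [Finset.range_eq_Ico]
    rw [Finset.sum_eq_sum_Ico_succ_bot (by omega : 0 < M)]
  rw [hsplit, ht0, htM]
  have hmid_sum : ∑ k ∈ Ico 1 M, (M.choose k : ℝ) * p^k * q^(M-k) * Gfun (M:ℝ) p ((k:ℕ):ℝ)
      ≤ Real.exp (1/(12*(M:ℝ))) * Real.sqrt (Real.pi * M / 2) := by
    calc ∑ k ∈ Ico 1 M, (M.choose k : ℝ) * p^k * q^(M-k) * Gfun (M:ℝ) p ((k:ℕ):ℝ)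
        ≤ ∑ k ∈ Ico 1 M, Real.exp (1/(12*(M:ℝ))) * Real.sqrt ((M:ℝ)/(2*Real.pi)) *
            (1/Real.sqrt ((k:ℝ) * ((M:ℝ) - (k:ℝ)))) := Finset.sum_le_sum hmid
      _ = Real.exp (1/(12*(M:ℝ))) * Real.sqrt ((M:ℝ)/(2*Real.pi)) *
            ∑ k ∈ Ico 1 M, (1:ℝ)/Real.sqrt ((k:ℝ) * ((M:ℝ) - (k:ℝ))) := by
          rw [Finset.mul_sum]
      _ ≤ Real.exp (1/(12*(M:ℝ))) * Real.sqrt ((M:ℝ)/(2*Real.pi)) * Real.pi := by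
          apply mul_le_mul_of_nonneg_left (sum_inv_sqrt_le_pi M hM) (by positivity)
      _ = Real.exp (1/(12*(M:ℝ))) * Real.sqrt (Real.pi * M / 2) := by
          rw [mul_assoc]
          congr 1
          have h1 : Real.sqrt ((M:ℝ)/(2*Real.pi)) * Real.pi
              = Real.sqrt (((M:ℝ)/(2*Real.pi)) * Real.pi^2) := by
            rw [Real.sqrt_mul (by positivity), Real.sqrt_sq Real.pi_pos.le]
          rw [h1]
          congr 1
          have hpine : Real.pi ≠ 0 := Real.pi_ne_zero
          field_simp
  linarith
end BSumPart

section FinalHelpers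
open MeasureTheory Finset

lemma Gfun_eq_exp_klBin (Mr p R : ℝ) (hMr : Mr ≠ 0) :
    Gfun Mr p (Mr * R) = Real.exp (Mr * klBin R p) := by
  unfold Gfun klBin
  congr 1
  have e1 : Mr * R/(Mr*p) = R/p := mul_div_mul_left _ _ hMr
  have e2 : Mr - Mr*R = Mr*(1-R) := by ring
  have e3 : (Mr*(1-R))/(Mr*(1-p)) = (1-R)/(1-p) := mul_div_mul_left _ _ hMr
  rw [e1, e2, e3]
  ring

lemma gibbs_nonneg {Z : Type*} [Fintype Z] (φ ψ : Z → ℝ)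
    (hφ0 : ∀ z, 0 ≤ φ z) (hφ1 : ∑ z, φ z = 1)
    (hψ0 : ∀ z, 0 ≤ ψ z) (hψ1 : ∑ z, ψ z = 1)
    (hac : ∀ z, ψ z = 0 → φ z = 0) :
    0 ≤ ∑ z, φ z * Real.log (φ z / ψ z) := by
  have hψpos : ∀ z, 0 < φ z → 0 < ψ z := by
    intro z hz
    rcases eq_or_lt_of_le (hψ0 z) with h2 | h2
    · exact absurd (hac z h2.symm) (by linarith)
    · exact h2
  have key : ∑ z, φ z * Real.log (ψ z / φ z) ≤ ∑ z, (ψ z - φ z) := by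
    apply Finset.sum_le_sum
    intro z _
    rcases eq_or_lt_of_le (hφ0 z) with h | h
    · rw [← h]
      simp
      linarith [hψ0 z]
    · have hψz : 0 < ψ z := hψpos z h
      have hlog := Real.log_le_sub_one_of_pos (div_pos hψz h)
      calc φ z * Real.log (ψ z/φ z) ≤ φ z * (ψ z/φ z - 1) :=
            mul_le_mul_of_nonneg_left hlog h.le
        _ = ψ z - φ z := by field_simp
  have hsum : ∑ z, (ψ z - φ z) = (0:ℝ) := by
    rw [Finset.sum_sub_distrib, hψ1, hφ1]
    ring
  have hneg : ∑ z, φ z * Real.log (φ z / ψ z) = - ∑ z, φ z * Real.log (ψ z / φ z) := by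
    rw [← Finset.sum_neg_distrib]
    apply Finset.sum_congr rfl
    intro z _
    rcases eq_or_lt_of_le (hφ0 z) with h | h
    · rw [← h]; ring
    · have hψz : 0 < ψ z := hψpos z h
      rw [Real.log_div h.ne' hψz.ne', Real.log_div hψz.ne' h.ne']
      ring
  rw [hneg]
  linarith


end FinalHelpers

section TheMain
open Finset

/-- Core PAC-Bayes inequality (Steps 1–2 of the proof of Theorem 1): for probability
mass functions `φ ≪ ψ` on a nonempty finite type `𝒵`, a probability space `(𝒵₀, μ₀)`,
a measurable loss with values in `(0,1)`, and `M ≥ 2` i.i.d. draws `Z₀^(1), …, Z₀^(M)`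
from `μ₀`, with probability at least `1 − δ`, on the event that the empirical risk
`R_M ∈ (0,1)`,
`M · kl(R_M ‖ R₀) ≤ KL(φ‖ψ) + log( exp(1/(12M)) √(πM/2) + 2 ) − log δ`. -/
theorem pacBayes_core_inequality
    {Z : Type*} [Fintype Z] [Nonempty Z]
    (φ ψ : Z → ℝ)
    (hφ0 : ∀ z, 0 ≤ φ z) (hφ1 : ∑ z, φ z = 1)
    (hψ0 : ∀ z, 0 ≤ ψ z) (hψ1 : ∑ z, ψ z = 1)
    (hac : ∀ z, ψ z = 0 → φ z = 0)
    {Z0 : Type*} [MeasurableSpace Z0]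
    (μ₀ : Measure Z0) [IsProbabilityMeasure μ₀]
    (loss : Z0 → Z → ℝ)
    (hloss_meas : ∀ z, Measurable fun z0 => loss z0 z)
    (hloss : ∀ z0 z, loss z0 z ∈ Set.Ioo (0 : ℝ) 1)
    (M : ℕ) (hM : 2 ≤ M)
    (δ : ℝ) (hδ : δ ∈ Set.Ioo (0 : ℝ) 1) :
    (Measure.pi fun _ : Fin M => μ₀)
      {Zv : Fin M → Z0 |
        (1 / (M : ℝ)) * ∑ v, ∑ z, φ z * loss (Zv v) z ∈ Set.Ioo (0 : ℝ) 1 →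
        (M : ℝ) * klBin ((1 / (M : ℝ)) * ∑ v, ∑ z, φ z * loss (Zv v) z)
            (∫ z0, ∑ z, φ z * loss z0 z ∂μ₀)
          ≤ (∑ z, φ z * Real.log (φ z / ψ z))
            + Real.log (Real.exp (1 / (12 * (M : ℝ))) * Real.sqrt (Real.pi * M / 2) + 2)
            - Real.log δ}
      ≥ ENNReal.ofReal (1 - δ) := by
  obtain ⟨hδ0, hδ1⟩ := hδ
  have hMr : (0:ℝ) < (M:ℝ) := by exact_mod_cast (by omega : 0 < M)
  -- the aggregated loss function
  set f : Z0 → ℝ := fun z0 => ∑ z, φ z * loss z0 z with hfdef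
  have hf_meas : Measurable f :=
    Finset.measurable_sum univ fun z _ => (hloss_meas z).const_mul (φ z)
  have hφex : ∃ z, 0 < φ z := by
    by_contra h
    push_neg at h
    have : ∑ z, φ z ≤ 0 := Finset.sum_nonpos fun z _ => h z
    linarith
  obtain ⟨z₁, hz₁⟩ := hφex
  have hf0 : ∀ z0, 0 < f z0 := by
    intro z0
    apply Finset.sum_pos' (fun z _ => mul_nonneg (hφ0 z) (hloss z0 z).1.le)
    exact ⟨z₁, Finset.mem_univ _, mul_pos hz₁ (hloss z0 z₁).1⟩
  have hf1 : ∀ z0, f z0 < 1 := by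
    intro z0
    have : ∑ z, φ z * loss z0 z < ∑ z, φ z := by
      apply Finset.sum_lt_sum
      · intro z _
        rcases eq_or_lt_of_le (hφ0 z) with h | h
        · rw [← h]; simp
        · exact le_of_lt (by nlinarith [(hloss z0 z).2, (hloss z0 z).1])
      · exact ⟨z₁, Finset.mem_univ _, by nlinarith [(hloss z0 z₁).2, (hloss z0 z₁).1]⟩
    rw [hφ1] at this
    exact this
  have hfint : Integrable f μ₀ :=
    Integrable.mono' (integrable_const 1) hf_meas.aestronglyMeasurable
      (Filter.Eventually.of_forall fun x => by
        rw [Real.norm_eq_abs, abs_of_nonneg (hf0 x).le]; exact (hf1 x).le)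
  set p : ℝ := ∫ z0, f z0 ∂μ₀ with hpdef
  have hp0 : 0 < p := by
    rw [hpdef]
    rw [integral_pos_iff_support_of_nonneg (fun x => (hf0 x).le) hfint]
    have : Function.support f = Set.univ := by
      ext x
      simp [Function.support, (hf0 x).ne']
    rw [this]
    simp
  have hp1 : p < 1 := by
    have hgint : Integrable (fun z0 => 1 - f z0) μ₀ := (integrable_const 1).sub hfint
    have h2 : 0 < ∫ z0, (1 - f z0) ∂μ₀ := by
      rw [integral_pos_iff_support_of_nonneg (fun x => by show (0:ℝ) ≤ 1 - f x; linarith [hf1 x]) hgint]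
      have : Function.support (fun z0 => 1 - f z0) = Set.univ := by
        ext x
        simp only [Function.support, Set.mem_setOf_eq, Set.mem_univ, iff_true]
        have := hf1 x; intro hc; rw [sub_eq_zero] at hc; linarith
      rw [this]
      simp
    rw [integral_sub (integrable_const 1) hfint] at h2
    simp at h2
    linarith
  have hq0 : 0 < 1 - p := by linarith
  -- the moment function
  have hMp : (M:ℝ) * p ≠ 0 := by positivity
  have hMq : (M:ℝ) * (1 - p) ≠ 0 := by positivity
  have hGc : Continuous (Gfun (M:ℝ) p) := continuous_Gfun _ _ hMp hMq
  have hGconv : ConvexOn ℝ (Set.Icc (0:ℝ) ((M:ℕ):ℝ)) (Gfun (M:ℝ) p) := convexOn_Gfun _ _ hMp hMq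
  -- the moment bound
  set ξ : ℝ := Real.exp (1 / (12 * (M : ℝ))) * Real.sqrt (Real.pi * M / 2) + 2 with hξdef
  have hξ0 : 0 < ξ := by rw [hξdef]; positivity
  have hmoment : ∫ z : Fin M → Z0, Gfun (M:ℝ) p (∑ v, f (z v)) ∂(Measure.pi fun _ => μ₀) ≤ ξ := by
    calc ∫ z : Fin M → Z0, Gfun (M:ℝ) p (∑ v, f (z v)) ∂(Measure.pi fun _ => μ₀)
        ≤ ∑ k ∈ range (M+1), (M.choose k : ℝ) * p^k * (1-p)^(M-k) * Gfun (M:ℝ) p k :=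
          binom_convex_bound μ₀ f hf_meas (fun x => (hf0 x).le) (fun x => (hf1 x).le)
            M (Gfun (M:ℝ) p) hGc hGconv
      _ ≤ ξ := binom_sum_le M hM p hp0 hp1
  -- Markov
  set W : (Fin M → Z0) → ℝ := fun z => Gfun (M:ℝ) p (∑ v, f (z v)) with hWdef
  have hW_meas : Measurable W := measurable_sum_comp μ₀ f hf_meas M _ hGc
  have hW_int : Integrable W (Measure.pi fun _ : Fin M => μ₀) :=
    integrable_comp_sum μ₀ f hf_meas (fun x => (hf0 x).le) (fun x => (hf1 x).le) M _ hGc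
  have hW_nn : ∀ z, 0 ≤ W z := fun z => (Real.exp_pos _).le
  set t : ℝ := ξ / δ with htdef
  have ht0 : 0 < t := by positivity
  have hmarkov := mul_meas_ge_le_integral_of_nonneg
    (Filter.Eventually.of_forall hW_nn) hW_int t
  have hA_meas : MeasurableSet {z : Fin M → Z0 | t ≤ W z} :=
    hW_meas measurableSet_Ici
  have hμA : (Measure.pi fun _ : Fin M => μ₀) {z | t ≤ W z} ≤ ENNReal.ofReal δ := by
    have htr : ((Measure.pi fun _ : Fin M => μ₀) {z | t ≤ W z}).toReal ≤ δ := by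
      have h2 : t * ((Measure.pi fun _ : Fin M => μ₀) {z | t ≤ W z}).toReal ≤ ξ :=
        le_trans hmarkov hmoment
      have h3 : t * δ = ξ := by rw [htdef]; field_simp
      nlinarith [ENNReal.toReal_nonneg
        (a := (Measure.pi fun _ : Fin M => μ₀) {z | t ≤ W z})]
    calc (Measure.pi fun _ : Fin M => μ₀) {z | t ≤ W z}
        = ENNReal.ofReal ((Measure.pi fun _ : Fin M => μ₀) {z | t ≤ W z}).toReal :=
          (ENNReal.ofReal_toReal (measure_ne_top _ _)).symm
      _ ≤ ENNReal.ofReal δ := ENNReal.ofReal_le_ofReal htr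
  -- complement inclusion
  have hincl : {z : Fin M → Z0 | t ≤ W z}ᶜ ⊆
      {Zv : Fin M → Z0 |
        (1 / (M : ℝ)) * ∑ v, ∑ z, φ z * loss (Zv v) z ∈ Set.Ioo (0 : ℝ) 1 →
        (M : ℝ) * klBin ((1 / (M : ℝ)) * ∑ v, ∑ z, φ z * loss (Zv v) z)
            (∫ z0, ∑ z, φ z * loss z0 z ∂μ₀)
          ≤ (∑ z, φ z * Real.log (φ z / ψ z))
            + Real.log ξ - Real.log δ} := by
    intro Zv hZv
    simp only [Set.mem_compl_iff, Set.mem_setOf_eq, not_le] at hZv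
    intro _
    set R : ℝ := (1 / (M : ℝ)) * ∑ v, ∑ z, φ z * loss (Zv v) z with hRdef
    have hMR : (M:ℝ) * R = ∑ v, f (Zv v) := by
      rw [hRdef]
      field_simp
      rfl
    have hWid : W Zv = Real.exp ((M:ℝ) * klBin R p) := by
      rw [hWdef]
      simp only []
      rw [← hMR]
      exact Gfun_eq_exp_klBin (M:ℝ) p R hMr.ne'
    have hlt : Real.exp ((M:ℝ) * klBin R p) < t := by rw [← hWid]; exact hZv
    have hlog : (M:ℝ) * klBin R p < Real.log t := by
      have := Real.log_lt_log (Real.exp_pos _) hlt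
      rwa [Real.log_exp] at this
    have hlogt : Real.log t = Real.log ξ - Real.log δ := by
      rw [htdef, Real.log_div hξ0.ne' hδ0.ne']
    have hgibbs := gibbs_nonneg φ ψ hφ0 hφ1 hψ0 hψ1 hac
    have hple : p = ∫ z0, ∑ z, φ z * loss z0 z ∂μ₀ := hpdef
    rw [← hple]
    linarith [hlog, hlogt ▸ hlog]
  -- finish
  calc ENNReal.ofReal (1 - δ)
      = 1 - ENNReal.ofReal δ := by
        rw [ENNReal.ofReal_sub 1 hδ0.le, ENNReal.ofReal_one]
    _ ≤ 1 - (Measure.pi fun _ : Fin M => μ₀) {z | t ≤ W z} := by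
        exact tsub_le_tsub_left hμA 1
    _ = (Measure.pi fun _ : Fin M => μ₀) {z : Fin M → Z0 | t ≤ W z}ᶜ :=
        (prob_compl_eq_one_sub hA_meas).symm
    _ ≤ _ := measure_mono hincl
end TheMain
end

section
/- Let 𝒵 be a nonempty finite type, let φ, ψ be probability measures on 𝒵 with φ absolutely continuous with respect to ψ, let (𝒵₀, Π₀) be a probability space, let loss : 𝒵₀ × 𝒵 → (0,1) be measurable, let M ≥ 2 be an integer, and let Z₀^(1),…,Z₀^(M) ∈ 𝒵₀ be fixed. Then, writing R_M = (1/M)·Σ_{v=1}^M E_{Ẑ∼φ}[loss(Z₀^(v), Ẑ)] and R₀ = E_{Z₀∼Π₀} E_{Ẑ∼φ}[loss(Z₀, Ẑ)], and assuming R_M ∈ (0,1), we have the deterministic inequality M·kl(R_M ‖ R₀) ≤ KL(φ‖ψ) + log E_{Ẑ∼ψ}[ exp( M·kl( (1/M)·Σ_{v=1}^M loss(Z₀^(v), Ẑ) ‖ E_{Z₀∼Π₀}[loss(Z₀, Ẑ)] ) ) ]. -/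
open MeasureTheory

section klAux
variable {Z : Type*} [Fintype Z]

/-- Log-sum inequality. -/
lemma log_sum_ineq (a b : Z → ℝ) (ha : ∀ z, 0 ≤ a z) (hb : ∀ z, 0 ≤ b z)
    (hab : ∀ z, b z = 0 → a z = 0) (hA : 0 < ∑ z, a z) (hB : 0 < ∑ z, b z) :
    (∑ z, a z) * Real.log ((∑ z, a z) / (∑ z, b z)) ≤ ∑ z, a z * Real.log (a z / b z) := by
  set A := ∑ z, a z with hAdef
  set B := ∑ z, b z with hBdef
  have key : ∀ z, a z - (A / B) * b z ≤ a z * Real.log (a z / b z) - a z * Real.log (A / B) := by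
    intro z
    rcases eq_or_lt_of_le (ha z) with h0 | h0
    · have hnn : 0 ≤ A / B * b z := mul_nonneg (by positivity) (hb z)
      simp only [← h0]
      simp
      linarith
    · have hbz : 0 < b z := lt_of_le_of_ne (hb z) (fun h => h0.ne' (hab z h.symm))
      have hx : 0 < b z * A / (a z * B) := div_pos (mul_pos hbz hA) (mul_pos h0 hB)
      have := Real.log_le_sub_one_of_pos hx
      have hrw : Real.log (b z * A / (a z * B)) = -(Real.log (a z / b z) - Real.log (A / B)) := by
        rw [Real.log_div (mul_pos hbz hA).ne' (mul_pos h0 hB).ne', Real.log_mul (ne_of_gt hbz) (ne_of_gt hA),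
          Real.log_mul (ne_of_gt h0) (ne_of_gt hB), Real.log_div (ne_of_gt h0) (ne_of_gt hbz),
          Real.log_div (ne_of_gt hA) (ne_of_gt hB)]
        ring
      rw [hrw] at this
      have h2 : -(a z * (b z * A / (a z * B) - 1)) ≤ a z * (Real.log (a z / b z) - Real.log (A / B)) := by
        rw [← neg_neg (a z * (Real.log (a z / b z) - Real.log (A / B))), neg_le_neg_iff, ← mul_neg]
        exact mul_le_mul_of_nonneg_left this (le_of_lt h0)
      calc a z - (A / B) * b z = -(a z * (b z * A / (a z * B) - 1)) := by
            field_simp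
            ring
        _ ≤ a z * (Real.log (a z / b z) - Real.log (A / B)) := h2
        _ = a z * Real.log (a z / b z) - a z * Real.log (A / B) := by ring
  have hsum := Finset.sum_le_sum (s := Finset.univ) (fun z _ => key z)
  have h1 : ∑ z, (a z - (A / B) * b z) = A - (A/B) * B := by
    rw [Finset.sum_sub_distrib, ← Finset.mul_sum]
  have h2 : ∑ z, (a z * Real.log (a z / b z) - a z * Real.log (A / B)) =
      (∑ z, a z * Real.log (a z / b z)) - A * Real.log (A / B) := by
    rw [Finset.sum_sub_distrib, ← Finset.sum_mul]
  rw [h1, h2] at hsum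
  have : A - (A/B)*B = 0 := by field_simp; ring
  linarith

/-- Gibbs' inequality. -/
lemma gibbs (p q : Z → ℝ) (hp : ∀ z, 0 ≤ p z) (hq : ∀ z, 0 ≤ q z)
    (hp1 : ∑ z, p z = 1) (hq1 : ∑ z, q z = 1) (hpq : ∀ z, q z = 0 → p z = 0) :
    0 ≤ ∑ z, p z * Real.log (p z / q z) := by
  have := log_sum_ineq p q hp hq hpq (by rw [hp1]; norm_num) (by rw [hq1]; norm_num)
  rw [hp1, hq1] at this
  simpa using this

/-- Donsker–Varadhan / change of measure, finite version. -/
lemma change_of_measure (p q : Z → ℝ) (f : Z → ℝ) (hp : ∀ z, 0 ≤ p z) (hq : ∀ z, 0 ≤ q z)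
    (hp1 : ∑ z, p z = 1) (hq1 : ∑ z, q z = 1) (hpq : ∀ z, q z = 0 → p z = 0) :
    ∑ z, p z * f z ≤ (∑ z, p z * Real.log (p z / q z)) + Real.log (∑ z, q z * Real.exp (f z)) := by
  set S := ∑ z, q z * Real.exp (f z) with hS
  have hSpos : 0 < S := by
    have hne : ∃ z, 0 < q z := by
      by_contra h
      push_neg at h
      have : ∀ z ∈ Finset.univ, q z = 0 := fun z _ => le_antisymm (h z) (hq z)
      rw [Finset.sum_congr rfl this] at hq1
      simp at hq1
    obtain ⟨z0, hz0⟩ := hne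
    refine Finset.sum_pos' (fun z _ => mul_nonneg (hq z) (Real.exp_pos _).le)
      ⟨z0, Finset.mem_univ z0, mul_pos hz0 (Real.exp_pos _)⟩
  set q' := fun z => q z * Real.exp (f z) / S with hq'
  have hq'0 : ∀ z, 0 ≤ q' z := fun z =>
    div_nonneg (mul_nonneg (hq z) (Real.exp_pos _).le) hSpos.le
  have hq'1 : ∑ z, q' z = 1 := by
    simp only [hq']
    rw [← Finset.sum_div, ← hS, div_self (ne_of_gt hSpos)]
  have hpq' : ∀ z, q' z = 0 → p z = 0 := by
    intro z hz
    simp only [hq', div_eq_zero_iff] at hz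
    rcases hz with hz | hz
    · rcases mul_eq_zero.1 hz with h | h
      · exact hpq z h
      · exact absurd h (ne_of_gt (Real.exp_pos _))
    · exact absurd hz (ne_of_gt hSpos)
  have hg := gibbs p q' hp hq'0 hp1 hq'1 hpq'
  have hterm : ∀ z, p z * Real.log (p z / q' z) =
      p z * Real.log (p z / q z) - p z * f z + p z * Real.log S := by
    intro z
    rcases eq_or_lt_of_le (hp z) with h0 | h0
    · simp [← h0]
    · have hqz : 0 < q z := lt_of_le_of_ne (hq z) (fun h => h0.ne' (hpq z h.symm))
      have : Real.log (p z / q' z) = Real.log (p z / q z) - f z + Real.log S := by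
        simp only [hq']
        rw [div_div_eq_mul_div, Real.log_div (mul_pos h0 hSpos).ne' (mul_pos hqz (Real.exp_pos _)).ne',
          Real.log_mul (ne_of_gt h0) (ne_of_gt hSpos),
          Real.log_mul (ne_of_gt hqz) (ne_of_gt (Real.exp_pos _)),
          Real.log_exp, Real.log_div (ne_of_gt h0) (ne_of_gt hqz)]
        ring
      rw [this]; ring
  rw [Finset.sum_congr rfl (fun z _ => hterm z)] at hg
  rw [Finset.sum_add_distrib, Finset.sum_sub_distrib, ← Finset.sum_mul, hp1, one_mul] at hg
  linarith

lemma kl_jensen (p r s : Z → ℝ) (hp : ∀ z, 0 ≤ p z) (hp1 : ∑ z, p z = 1)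
    (hr : ∀ z, r z ∈ Set.Ioo (0:ℝ) 1) (hs : ∀ z, s z ∈ Set.Ioo (0:ℝ) 1)
    (hR : (∑ z, p z * r z) ∈ Set.Ioo (0:ℝ) 1) :
    klBin (∑ z, p z * r z) (∑ z, p z * s z) ≤ ∑ z, p z * klBin (r z) (s z) := by
  have hex : ∃ z, 0 < p z := by
    by_contra h
    push_neg at h
    have : ∀ z ∈ Finset.univ, p z = 0 := fun z _ => le_antisymm (h z) (hp z)
    rw [Finset.sum_congr rfl this] at hp1
    simp at hp1
  obtain ⟨z0, hz0⟩ := hex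
  have hS0pos : 0 < ∑ z, p z * s z :=
    Finset.sum_pos' (fun z _ => mul_nonneg (hp z) (hs z).1.le)
      ⟨z0, Finset.mem_univ z0, mul_pos hz0 (hs z0).1⟩
  have hS0lt : (∑ z, p z * s z) < 1 := by
    have : (∑ z, p z * s z) < ∑ z, p z :=
      Finset.sum_lt_sum (fun z _ => by nlinarith [(hs z).2, hp z, (hs z).1])
        ⟨z0, Finset.mem_univ z0, by nlinarith [(hs z0).2]⟩
    linarith [hp1 ▸ this]
  -- first component
  have h1 := log_sum_ineq (fun z => p z * r z) (fun z => p z * s z)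
    (fun z => mul_nonneg (hp z) (hr z).1.le) (fun z => mul_nonneg (hp z) (hs z).1.le)
    (fun z hz => by
      rcases mul_eq_zero.1 hz with h | h
      · simp [h]
      · exact absurd h (hs z).1.ne')
    hR.1 hS0pos
  -- second component
  have hsum1 : ∑ z, p z * (1 - r z) = 1 - ∑ z, p z * r z := by
    simp only [mul_sub, mul_one]
    rw [Finset.sum_sub_distrib, hp1]
  have hsum2 : ∑ z, p z * (1 - s z) = 1 - ∑ z, p z * s z := by
    simp only [mul_sub, mul_one]
    rw [Finset.sum_sub_distrib, hp1]
  have h2 := log_sum_ineq (fun z => p z * (1 - r z)) (fun z => p z * (1 - s z))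
    (fun z => mul_nonneg (hp z) (by linarith [(hr z).2]))
    (fun z => mul_nonneg (hp z) (by linarith [(hs z).2]))
    (fun z hz => by
      rcases mul_eq_zero.1 hz with h | h
      · simp [h]
      · exact absurd h (by linarith [(hs z).2] : (1:ℝ) - s z ≠ 0).elim)
    (by rw [hsum1]; linarith [hR.2]) (by rw [hsum2]; linarith)
  rw [hsum1, hsum2] at h2
  -- rewrite termwise
  have e1 : ∀ z, p z * r z * Real.log (p z * r z / (p z * s z)) =
      p z * (r z * Real.log (r z / s z)) := by
    intro z
    rcases eq_or_lt_of_le (hp z) with h0 | h0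
    · rw [← h0]; ring
    · rw [mul_div_mul_left _ _ h0.ne']; ring
  have e2 : ∀ z, p z * (1 - r z) * Real.log (p z * (1 - r z) / (p z * (1 - s z))) =
      p z * ((1 - r z) * Real.log ((1 - r z) / (1 - s z))) := by
    intro z
    rcases eq_or_lt_of_le (hp z) with h0 | h0
    · rw [← h0]; ring
    · rw [mul_div_mul_left _ _ h0.ne']; ring
  rw [Finset.sum_congr rfl (fun z _ => e1 z)] at h1
  rw [Finset.sum_congr rfl (fun z _ => e2 z)] at h2
  have : ∑ z, p z * klBin (r z) (s z) =
      (∑ z, p z * (r z * Real.log (r z / s z)))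
      + ∑ z, p z * ((1 - r z) * Real.log ((1 - r z) / (1 - s z))) := by
    rw [← Finset.sum_add_distrib]
    exact Finset.sum_congr rfl (fun z _ => by rw [klBin]; ring)
  rw [klBin, this]
  exact add_le_add h1 h2
end klAux

/-- Step 1 of the PAC-Bayes argument (Jensen + change of measure), as a
deterministic inequality: for probability mass functions `φ ≪ ψ` on a nonempty
finite type `𝒵`, a probability space `(𝒵₀, μ₀)`, a measurable loss with values in
`(0,1)`, `M ≥ 2`, and fixed `Z₀^(1), …, Z₀^(M)` with empirical risk
`R_M ∈ (0,1)`, one has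
`M · kl(R_M ‖ R₀) ≤ KL(φ‖ψ) + log E_{Ẑ∼ψ} exp( M · kl( (1/M) ∑_v loss(Z₀^(v), Ẑ) ‖ E_{Z₀∼μ₀} loss(Z₀, Ẑ) ) )`. -/
theorem pacBayes_change_of_measure
    {Z : Type*} [Fintype Z] [Nonempty Z]
    (φ ψ : Z → ℝ)
    (hφ0 : ∀ z, 0 ≤ φ z) (hφ1 : ∑ z, φ z = 1)
    (hψ0 : ∀ z, 0 ≤ ψ z) (hψ1 : ∑ z, ψ z = 1)
    (hac : ∀ z, ψ z = 0 → φ z = 0)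
    {Z0 : Type*} [MeasurableSpace Z0]
    (μ₀ : Measure Z0) [IsProbabilityMeasure μ₀]
    (loss : Z0 → Z → ℝ)
    (hloss_meas : ∀ z, Measurable fun z0 => loss z0 z)
    (hloss : ∀ z0 z, loss z0 z ∈ Set.Ioo (0 : ℝ) 1)
    (M : ℕ) (hM : 2 ≤ M)
    (Zv : Fin M → Z0)
    (hRM : (1 / (M : ℝ)) * ∑ v, ∑ z, φ z * loss (Zv v) z ∈ Set.Ioo (0 : ℝ) 1) :
    (M : ℝ) * klBin ((1 / (M : ℝ)) * ∑ v, ∑ z, φ z * loss (Zv v) z)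
        (∫ z0, ∑ z, φ z * loss z0 z ∂μ₀)
      ≤ (∑ z, φ z * Real.log (φ z / ψ z))
        + Real.log (∑ z, ψ z *
            Real.exp ((M : ℝ) *
              klBin ((1 / (M : ℝ)) * ∑ v, loss (Zv v) z) (∫ z0, loss z0 z ∂μ₀))) := by
  have hMpos : (0:ℝ) < M := by exact_mod_cast Nat.lt_of_lt_of_le Nat.zero_lt_two hM
  haveI : Nonempty (Fin M) := ⟨⟨0, by omega⟩⟩
  set r : Z → ℝ := fun z => (1 / (M : ℝ)) * ∑ v, loss (Zv v) z with hrdef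
  set s : Z → ℝ := fun z => ∫ z0, loss z0 z ∂μ₀ with hsdef
  -- r z ∈ (0,1)
  have hr : ∀ z, r z ∈ Set.Ioo (0:ℝ) 1 := by
    intro z
    have hpos : 0 < ∑ v, loss (Zv v) z :=
      Finset.sum_pos (fun v _ => (hloss (Zv v) z).1) Finset.univ_nonempty
    have hlt : (∑ v, loss (Zv v) z) < M := by
      calc (∑ v, loss (Zv v) z) < ∑ _v : Fin M, (1:ℝ) :=
            Finset.sum_lt_sum_of_nonempty Finset.univ_nonempty (fun v _ => (hloss (Zv v) z).2)
        _ = M := by simp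
    constructor
    · have : 0 < 1/(M:ℝ) := by positivity
      exact mul_pos this hpos
    · rw [show r z = (∑ v, loss (Zv v) z)/(M:ℝ) from by simp only [hrdef]; ring,
        div_lt_one hMpos]
      exact hlt
  -- integrability
  have hint : ∀ z, Integrable (fun z0 => loss z0 z) μ₀ := by
    intro z
    refine ⟨(hloss_meas z).aestronglyMeasurable, ?_⟩
    refine HasFiniteIntegral.of_bounded (C := 1) (ae_of_all _ fun z0 => ?_)
    rw [Real.norm_eq_abs, abs_of_pos (hloss z0 z).1]
    exact (hloss z0 z).2.le
  -- s z ∈ (0,1)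
  have hs : ∀ z, s z ∈ Set.Ioo (0:ℝ) 1 := by
    intro z
    constructor
    · rw [hsdef]
      have := (integral_pos_iff_support_of_nonneg (fun z0 => (hloss z0 z).1.le) (hint z)).2
      refine this ?_
      have hsupp : Function.support (fun z0 => loss z0 z) = Set.univ :=
        Set.eq_univ_of_forall (fun z0 => Function.mem_support.2 (hloss z0 z).1.ne')
      rw [hsupp]
      simp
    · have h1 : ∫ _z0, (1:ℝ) ∂μ₀ = 1 := by simp
      have hlt : s z < ∫ _z0, (1:ℝ) ∂μ₀ := by
        rw [hsdef]
        have hpos : 0 < ∫ z0, ((1:ℝ) - loss z0 z) ∂μ₀ := by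
          have hint2 : Integrable (fun z0 => (1:ℝ) - loss z0 z) μ₀ :=
            (integrable_const 1).sub (hint z)
          refine (integral_pos_iff_support_of_nonneg
            (fun z0 => by have := (hloss z0 z).2; show (0:ℝ) ≤ 1 - loss z0 z; linarith) hint2).2 ?_
          have : Function.support (fun z0 => (1:ℝ) - loss z0 z) = Set.univ :=
            Set.eq_univ_of_forall
              (fun z0 => Function.mem_support.2 (sub_ne_zero_of_ne (ne_of_gt (hloss z0 z).2)))
          rw [this]; simp
        have := integral_sub (integrable_const (1:ℝ)) (hint z)
        rw [this] at hpos
        linarith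
      linarith [h1 ▸ hlt]
  -- rewrite R_M
  have hRM_eq : (1 / (M : ℝ)) * ∑ v, ∑ z, φ z * loss (Zv v) z = ∑ z, φ z * r z := by
    rw [Finset.sum_comm, Finset.mul_sum]
    refine Finset.sum_congr rfl (fun z _ => ?_)
    simp only [hrdef, Finset.mul_sum]
    exact Finset.sum_congr rfl (fun v _ => by ring)
  -- rewrite R₀
  have hR0_eq : (∫ z0, ∑ z, φ z * loss z0 z ∂μ₀) = ∑ z, φ z * s z := by
    rw [integral_finset_sum _ (fun z _ => (hint z).const_mul (φ z))]
    exact Finset.sum_congr rfl (fun z _ => integral_const_mul _ _)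
  rw [hRM_eq] at hRM ⊢
  rw [hR0_eq]
  have hjen := kl_jensen φ r s hφ0 hφ1 hr hs hRM
  have hdv := change_of_measure φ ψ (fun z => (M:ℝ) * klBin (r z) (s z)) hφ0 hψ0 hφ1 hψ1 hac
  calc (M:ℝ) * klBin (∑ z, φ z * r z) (∑ z, φ z * s z)
      ≤ (M:ℝ) * ∑ z, φ z * klBin (r z) (s z) :=
        mul_le_mul_of_nonneg_left hjen hMpos.le
    _ = ∑ z, φ z * ((M:ℝ) * klBin (r z) (s z)) := by
        rw [Finset.mul_sum]; exact Finset.sum_congr rfl (fun z _ => by ring)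
    _ ≤ _ := hdv
end
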